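/- For positive definite matrices A and B, tr(A # B) ≤ tr(A^{1/2}B^{1/2}) ≤ tr((AB)^{1/2}), where A # B = A^{1/2}(A^{-1/2}BA^{-1/2})^{1/2}A^{1/2} is the geometric mean. -/

import Mathlib

open scoped ComplexOrder
open MeasureTheory

/-- The positive semidefinite square root of a matrix (zero if not positive semidefinite). -/
noncomputable def msqrt {N : ℕ} (A : Matrix (Fin N) (Fin N) ℂ) : Matrix (Fin N) (Fin N) ℂ :=
  by classical exact if h : A.PosSemidef then (h.1.eigenvectorUnitary : Matrix (Fin N) (Fin N) ℂ) *
    Matrix.diagonal ((↑) ∘ (√·) ∘ h.1.eigenvalues) *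
    (star h.1.eigenvectorUnitary : Matrix (Fin N) (Fin N) ℂ) else 0

/-- The Pusz–Woronowicz geometric mean `A # B = A^{1/2} (A^{-1/2} B A^{-1/2})^{1/2} A^{1/2}`. -/
noncomputable def geom {N : ℕ} (A B : Matrix (Fin N) (Fin N) ℂ) : Matrix (Fin N) (Fin N) ℂ :=
  msqrt A * msqrt ((msqrt A)⁻¹ * B * (msqrt A)⁻¹) * msqrt A

/-- The logarithm of a Hermitian matrix, via the spectral theorem (zero if not Hermitian). -/
noncomputable def mlog {N : ℕ} (A : Matrix (Fin N) (Fin N) ℂ) : Matrix (Fin N) (Fin N) ℂ :=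
  by classical exact if h : A.IsHermitian then h.cfc Real.log else 0

/-- The log Euclidean mean `exp((log A + log B)/2)`. -/
noncomputable def logEuclid {N : ℕ} (A B : Matrix (Fin N) (Fin N) ℂ) : Matrix (Fin N) (Fin N) ℂ :=
  NormedSpace.exp ((2:ℂ)⁻¹ • (mlog A + mlog B))

open Matrix

section helpers
variable {n : ℕ}

lemma trace_form (M N : Matrix (Fin n) (Fin n) ℂ) :
    (Mᴴ * N).trace = ∑ p : Fin n × Fin n, (starRingEnd ℂ) (M p.1 p.2) * N p.1 p.2 := by
  rw [Matrix.trace, Fintype.sum_prod_type]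
  simp only [Matrix.diag_apply, Matrix.mul_apply, Matrix.conjTranspose_apply, starRingEnd_apply]
  rw [Finset.sum_comm]

lemma trace_self_coe (M : Matrix (Fin n) (Fin n) ℂ) :
    (Mᴴ * M).trace = ((∑ p : Fin n × Fin n, Complex.normSq (M p.1 p.2) : ℝ) : ℂ) := by
  rw [trace_form]
  push_cast
  refine Finset.sum_congr rfl fun p _ => ?_
  rw [mul_comm, Complex.mul_conj]

lemma trace_self_im (M : Matrix (Fin n) (Fin n) ℂ) : (Mᴴ * M).trace.im = 0 := by
  rw [trace_self_coe]; simp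

lemma trace_self_re_nonneg (M : Matrix (Fin n) (Fin n) ℂ) : 0 ≤ (Mᴴ * M).trace.re := by
  rw [trace_self_coe]
  simp only [Complex.ofReal_re]
  exact Finset.sum_nonneg fun p _ => Complex.normSq_nonneg _

lemma trace_cs (M N : Matrix (Fin n) (Fin n) ℂ) :
    ‖(Mᴴ * N).trace‖ ^ 2 ≤ (Mᴴ * M).trace.re * (Nᴴ * N).trace.re := by
  let x : EuclideanSpace ℂ (Fin n × Fin n) :=
    (WithLp.equiv 2 (Fin n × Fin n → ℂ)).symm (fun p => M p.1 p.2)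
  let y : EuclideanSpace ℂ (Fin n × Fin n) :=
    (WithLp.equiv 2 (Fin n × Fin n → ℂ)).symm (fun p => N p.1 p.2)
  have hxy : ∀ (P Q : Matrix (Fin n) (Fin n) ℂ),
      (Pᴴ * Q).trace = inner ℂ ((WithLp.equiv 2 (Fin n × Fin n → ℂ)).symm (fun p => P p.1 p.2) : EuclideanSpace ℂ (Fin n × Fin n)) ((WithLp.equiv 2 (Fin n × Fin n → ℂ)).symm (fun p => Q p.1 p.2) : EuclideanSpace ℂ (Fin n × Fin n)) := by
    intro P Q
    rw [trace_form, PiLp.inner_apply]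
    simp [RCLike.inner_apply, WithLp.equiv_symm_apply, mul_comm]
  have h1 : (Mᴴ * N).trace = inner ℂ x y := hxy M N
  have h2 : (Mᴴ * M).trace = inner ℂ x x := hxy M M
  have h3 : (Nᴴ * N).trace = inner ℂ y y := hxy N N
  have hcs := norm_inner_le_norm (𝕜 := ℂ) x y
  have h2' : (Mᴴ * M).trace.re = ‖x‖ ^ 2 := by
    rw [h2, inner_self_eq_norm_sq_to_K (𝕜 := ℂ)]; simp [← Complex.ofReal_pow]
  have h3' : (Nᴴ * N).trace.re = ‖y‖ ^ 2 := by
    rw [h3, inner_self_eq_norm_sq_to_K (𝕜 := ℂ)]; simp [← Complex.ofReal_pow]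
  rw [h1, h2', h3']
  calc ‖(inner ℂ x y : ℂ)‖ ^ 2 = ‖(inner ℂ x y : ℂ)‖ ^ 2 := rfl
    _ ≤ (‖x‖ * ‖y‖) ^ 2 := pow_le_pow_left₀ (norm_nonneg _) hcs 2
    _ = ‖x‖ ^ 2 * ‖y‖ ^ 2 := mul_pow _ _ _


lemma msqrt_def {A : Matrix (Fin n) (Fin n) ℂ} (h : A.PosSemidef) : msqrt A =
    (h.1.eigenvectorUnitary : Matrix (Fin n) (Fin n) ℂ) *
    Matrix.diagonal ((↑) ∘ (√·) ∘ h.1.eigenvalues) *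
    (star h.1.eigenvectorUnitary : Matrix (Fin n) (Fin n) ℂ) := by
  unfold msqrt; exact dif_pos h

lemma msqrt_psd {A : Matrix (Fin n) (Fin n) ℂ} (h : A.PosSemidef) : (msqrt A).PosSemidef := by
  rw [msqrt_def h]
  have hd : (Matrix.diagonal ((↑) ∘ (√·) ∘ h.1.eigenvalues) : Matrix (Fin n) (Fin n) ℂ).PosSemidef := by
    rw [posSemidef_diagonal_iff]
    intro i
    simp only [Function.comp_apply]
    exact_mod_cast Real.sqrt_nonneg _
  have := hd.mul_mul_conjTranspose_same (h.1.eigenvectorUnitary : Matrix (Fin n) (Fin n) ℂ)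
  simpa [Matrix.star_eq_conjTranspose] using this

lemma msqrt_herm {A : Matrix (Fin n) (Fin n) ℂ} (h : A.PosSemidef) : (msqrt A)ᴴ = msqrt A :=
  (msqrt_psd h).1

lemma msqrt_sq {A : Matrix (Fin n) (Fin n) ℂ} (h : A.PosSemidef) : msqrt A * msqrt A = A := by
  rw [msqrt_def h]
  conv_rhs => rw [h.1.spectral_theorem]
  rw [Unitary.conjStarAlgAut_apply]
  have hu : (star h.1.eigenvectorUnitary : Matrix (Fin n) (Fin n) ℂ) * (h.1.eigenvectorUnitary : Matrix (Fin n) (Fin n) ℂ) = 1 :=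
    Unitary.coe_star_mul_self _
  have hD : (Matrix.diagonal ((↑) ∘ (√·) ∘ h.1.eigenvalues) : Matrix (Fin n) (Fin n) ℂ) *
      Matrix.diagonal ((↑) ∘ (√·) ∘ h.1.eigenvalues) = diagonal (RCLike.ofReal ∘ h.1.eigenvalues) := by
    rw [diagonal_mul_diagonal]
    congr 1; funext i
    simp only [Function.comp_apply]
    rw [← Complex.ofReal_mul, Real.mul_self_sqrt (h.eigenvalues_nonneg i)]
    rfl
  calc _ = (h.1.eigenvectorUnitary : Matrix (Fin n) (Fin n) ℂ) * (Matrix.diagonal ((↑) ∘ (√·) ∘ h.1.eigenvalues) *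
      ((star h.1.eigenvectorUnitary : Matrix (Fin n) (Fin n) ℂ) * (h.1.eigenvectorUnitary : Matrix (Fin n) (Fin n) ℂ)) *
      Matrix.diagonal ((↑) ∘ (√·) ∘ h.1.eigenvalues)) * (star h.1.eigenvectorUnitary : Matrix (Fin n) (Fin n) ℂ) := by
        simp only [Matrix.mul_assoc]
    _ = _ := by rw [hu, Matrix.mul_one, hD]

lemma msqrt_det {A : Matrix (Fin n) (Fin n) ℂ} (h : A.PosSemidef) (hd : A.det ≠ 0) :
    IsUnit (msqrt A).det := by
  have h2 : (msqrt A).det * (msqrt A).det = A.det := by rw [← Matrix.det_mul, msqrt_sq h]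
  exact isUnit_iff_ne_zero.2 fun h0 => hd (by rw [← h2, h0, mul_zero])

end helpers

theorem stmt1 {N : ℕ} (A B : Matrix (Fin N) (Fin N) ℂ) (hA : A.PosDef) (hB : B.PosDef) :
    (geom A B).trace ≤ (msqrt A * msqrt B).trace ∧
    (msqrt A * msqrt B).trace ≤
      (msqrt A * msqrt (msqrt A * B * msqrt A) * (msqrt A)⁻¹).trace := by
  classical
  have hApsd := hA.posSemidef
  have hBpsd := hB.posSemidef
  set X : Matrix (Fin N) (Fin N) ℂ := msqrt A with hXdef
  set Y : Matrix (Fin N) (Fin N) ℂ := msqrt B with hYdef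
  have hX2 : X * X = A := msqrt_sq hApsd
  have hY2 : Y * Y = B := msqrt_sq hBpsd
  have hXH : Xᴴ = X := msqrt_herm hApsd
  have hYH : Yᴴ = Y := msqrt_herm hBpsd
  have hXpsd : X.PosSemidef := msqrt_psd hApsd
  have hYpsd : Y.PosSemidef := msqrt_psd hBpsd
  have hXu : IsUnit X.det := msqrt_det hApsd hA.det_pos.ne'
  have hYu : IsUnit Y.det := msqrt_det hBpsd hB.det_pos.ne'
  haveI iX : Invertible X := X.invertibleOfIsUnitDet hXu
  haveI iY : Invertible Y := Y.invertibleOfIsUnitDet hYu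
  have hXiH : (X⁻¹)ᴴ = X⁻¹ := by rw [Matrix.conjTranspose_nonsing_inv, hXH]
  have hdXi : (X⁻¹).det ≠ 0 := by
    have h1 : X.det * (X⁻¹).det = 1 := by
      rw [← Matrix.det_mul, Matrix.mul_inv_of_invertible, Matrix.det_one]
    exact right_ne_zero_of_mul_eq_one h1
  -- fourth roots
  set Xh : Matrix (Fin N) (Fin N) ℂ := msqrt X with hXhdef
  set Yh : Matrix (Fin N) (Fin N) ℂ := msqrt Y with hYhdef
  have hXh2 : Xh * Xh = X := msqrt_sq hXpsd
  have hYh2 : Yh * Yh = Y := msqrt_sq hYpsd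
  have hXhH : Xhᴴ = Xh := msqrt_herm hXpsd
  have hYhH : Yhᴴ = Yh := msqrt_herm hYpsd
  -- the matrix m-trace
  have hmeq : ((Xh * Yh)ᴴ * (Xh * Yh)).trace = (X * Y).trace := by
    rw [Matrix.conjTranspose_mul, hXhH, hYhH]
    calc (Yh * Xh * (Xh * Yh)).trace = (Yh * (X * Yh)).trace := by
          rw [Matrix.mul_assoc, ← Matrix.mul_assoc Xh Xh Yh, hXh2]
      _ = (X * Yh * Yh).trace := by rw [Matrix.trace_mul_comm, Matrix.mul_assoc]
      _ = (X * Y).trace := by rw [Matrix.mul_assoc, hYh2]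
  have hm_im : (X * Y).trace.im = 0 := by rw [← hmeq]; exact trace_self_im _
  have hm_nonneg : 0 ≤ (X * Y).trace.re := by rw [← hmeq]; exact trace_self_re_nonneg _
  constructor
  · -- first inequality
    have hCpsd : (X⁻¹ * B * X⁻¹).PosSemidef := by
      have := hBpsd.conjTranspose_mul_mul_same (X⁻¹)
      rwa [hXiH] at this
    set S : Matrix (Fin N) (Fin N) ℂ := msqrt (X⁻¹ * B * X⁻¹) with hSdef
    have hS2 : S * S = X⁻¹ * B * X⁻¹ := msqrt_sq hCpsd
    have hSH : Sᴴ = S := msqrt_herm hCpsd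
    set G : Matrix (Fin N) (Fin N) ℂ := X * S * X with hGdef
    have hgeom : geom A B = G := rfl
    have hGH : Gᴴ = G := by
      rw [hGdef, Matrix.conjTranspose_mul, Matrix.conjTranspose_mul, hXH, hSH,
        ← Matrix.mul_assoc]
    have hGpsd : G.PosSemidef := by
      have := (msqrt_psd hCpsd).conjTranspose_mul_mul_same X
      rwa [hXH, ← hSdef, ← hGdef] at this
    have hYiH : (Y⁻¹)ᴴ = Y⁻¹ := by rw [Matrix.conjTranspose_nonsing_inv, hYH]
    have hB4 : X * (S * (S * X)) = B := by
      calc X * (S * (S * X)) = X * (X⁻¹ * B * X⁻¹) * X := by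
            rw [← hS2]; simp only [Matrix.mul_assoc]
        _ = B := by
            simp only [Matrix.mul_assoc, Matrix.inv_mul_of_invertible, Matrix.mul_one,
              Matrix.mul_inv_cancel_left_of_invertible]
    set V : Matrix (Fin N) (Fin N) ℂ := Y⁻¹ * (G * X⁻¹) with hVdef
    have hVH : Vᴴ = X⁻¹ * (G * Y⁻¹) := by
      rw [hVdef, Matrix.conjTranspose_mul, Matrix.conjTranspose_mul, hGH, hXiH, hYiH,
        Matrix.mul_assoc]
    have key1 : G * (X⁻¹ * (X⁻¹ * G)) = B := by
      calc G * (X⁻¹ * (X⁻¹ * G))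
          = X * (S * (X * (X⁻¹ * (X⁻¹ * (X * (S * X)))))) := by
            rw [hGdef]; simp only [Matrix.mul_assoc]
        _ = X * (S * (S * X)) := by
            rw [Matrix.inv_mul_cancel_left_of_invertible, Matrix.mul_inv_cancel_left_of_invertible]
        _ = B := hB4
    have hVVH : V * Vᴴ = 1 := by
      calc V * Vᴴ = Y⁻¹ * ((G * (X⁻¹ * (X⁻¹ * G))) * Y⁻¹) := by
            rw [hVH, hVdef]; simp only [Matrix.mul_assoc]
        _ = Y⁻¹ * (Y * Y * Y⁻¹) := by rw [key1, ← hY2]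
        _ = 1 := by
            simp only [Matrix.mul_assoc, Matrix.mul_inv_of_invertible, Matrix.mul_one,
              Matrix.inv_mul_of_invertible]
    have hVHV : Vᴴ * V = 1 := mul_eq_one_comm.mp hVVH
    have hYVX : Y * (V * X) = G := by
      rw [hVdef]
      simp only [Matrix.mul_assoc, Matrix.mul_inv_cancel_left_of_invertible,
        Matrix.inv_mul_of_invertible, Matrix.mul_one]
    have hXhXh : ∀ Z : Matrix (Fin N) (Fin N) ℂ, Xh * (Xh * Z) = X * Z := fun Z => by
      rw [← Matrix.mul_assoc, hXh2]
    set M1 : Matrix (Fin N) (Fin N) ℂ := Xh * (Vᴴ * Yh) with hM1def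
    have hM1H : M1ᴴ = Yh * (V * Xh) := by
      rw [hM1def, Matrix.conjTranspose_mul, Matrix.conjTranspose_mul, hXhH, hYhH,
        Matrix.conjTranspose_conjTranspose, Matrix.mul_assoc]
    have hceq : (M1ᴴ * (Xh * Yh)).trace = G.trace := by
      calc (M1ᴴ * (Xh * Yh)).trace = (Yh * (V * (X * Yh))).trace := by
            rw [hM1H]; simp only [Matrix.mul_assoc, hXhXh]
        _ = ((V * (X * Yh)) * Yh).trace := Matrix.trace_mul_comm _ _
        _ = (V * (X * (Yh * Yh))).trace := by simp only [Matrix.mul_assoc]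
        _ = (V * (X * Y)).trace := by rw [hYh2]
        _ = ((V * X) * Y).trace := by rw [← Matrix.mul_assoc V X Y]
        _ = (Y * (V * X)).trace := Matrix.trace_mul_comm _ _
        _ = G.trace := by rw [hYVX]
    have heeq : (M1ᴴ * M1).trace = (G * Vᴴ).trace := by
      calc (M1ᴴ * M1).trace = (Yh * (V * (X * (Vᴴ * Yh)))).trace := by
            rw [hM1H, hM1def]; simp only [Matrix.mul_assoc, hXhXh]
        _ = ((V * (X * (Vᴴ * Yh))) * Yh).trace := Matrix.trace_mul_comm _ _
        _ = (V * (X * (Vᴴ * (Yh * Yh)))).trace := by simp only [Matrix.mul_assoc]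
        _ = (V * (X * (Vᴴ * Y))).trace := by rw [hYh2]
        _ = ((V * X) * (Vᴴ * Y)).trace := by simp only [Matrix.mul_assoc]
        _ = ((Vᴴ * Y) * (V * X)).trace := Matrix.trace_mul_comm _ _
        _ = (Vᴴ * (Y * (V * X))).trace := by simp only [Matrix.mul_assoc]
        _ = (Vᴴ * G).trace := by rw [hYVX]
        _ = (G * Vᴴ).trace := Matrix.trace_mul_comm _ _
    set Gh : Matrix (Fin N) (Fin N) ℂ := msqrt G with hGhdef
    have hGh2 : Gh * Gh = G := msqrt_sq hGpsd
    have hGhH : Ghᴴ = Gh := msqrt_herm hGpsd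
    have htrG : (Ghᴴ * Gh).trace = G.trace := by rw [hGhH, hGh2]
    have hg_im : G.trace.im = 0 := by rw [← htrG]; exact trace_self_im _
    have hg_nonneg : 0 ≤ G.trace.re := by rw [← htrG]; exact trace_self_re_nonneg _
    have hcs2 := trace_cs Gh (Gh * Vᴴ)
    have f1 : Ghᴴ * (Gh * Vᴴ) = G * Vᴴ := by rw [hGhH, ← Matrix.mul_assoc, hGh2]
    have f3 : ((Gh * Vᴴ)ᴴ * (Gh * Vᴴ)).trace = G.trace := by
      calc ((Gh * Vᴴ)ᴴ * (Gh * Vᴴ)).trace = (V * (Gh * (Gh * Vᴴ))).trace := by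
            rw [Matrix.conjTranspose_mul, hGhH, Matrix.conjTranspose_conjTranspose]
            simp only [Matrix.mul_assoc]
        _ = (V * (G * Vᴴ)).trace := by rw [← Matrix.mul_assoc Gh Gh Vᴴ, hGh2]
        _ = ((G * Vᴴ) * V).trace := Matrix.trace_mul_comm _ _
        _ = (G * (Vᴴ * V)).trace := by simp only [Matrix.mul_assoc]
        _ = G.trace := by rw [hVHV, Matrix.mul_one]
    rw [f1, htrG, f3] at hcs2
    have habs2 : ‖(G * Vᴴ).trace‖ ≤ G.trace.re := by
      nlinarith [norm_nonneg ((G * Vᴴ).trace), hg_nonneg, hcs2]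
    have hcs1 := trace_cs M1 (Xh * Yh)
    rw [hceq, heeq, hmeq] at hcs1
    have hGabs : G.trace.re ≤ ‖G.trace‖ := Complex.re_le_norm _
    have heV : (G * Vᴴ).trace.re ≤ G.trace.re :=
      le_trans (Complex.re_le_norm _) habs2
    have heV0 : 0 ≤ (G * Vᴴ).trace.re := by rw [← heeq]; exact trace_self_re_nonneg _
    have final_re : G.trace.re ≤ (X * Y).trace.re := by
      nlinarith [hg_nonneg, hm_nonneg, hcs1, hGabs, heV, heV0,
        norm_nonneg (G.trace),
        mul_le_mul_of_nonneg_right heV hm_nonneg,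
        mul_self_le_mul_self hg_nonneg hGabs]
    rw [hgeom]
    exact Complex.le_def.mpr ⟨final_re, by rw [hg_im, hm_im]⟩
  · -- second inequality
    set R : Matrix (Fin N) (Fin N) ℂ := msqrt (X * B * X) with hRdef
    have hXBX : (X * B * X).PosSemidef := by
      have := hBpsd.conjTranspose_mul_mul_same X
      rwa [hXH] at this
    have hR2 : R * R = X * B * X := msqrt_sq hXBX
    have hRH : Rᴴ = R := msqrt_herm hXBX
    have hRu : IsUnit R.det := by
      refine msqrt_det hXBX ?_
      rw [Matrix.det_mul, Matrix.det_mul]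
      exact mul_ne_zero (mul_ne_zero hXu.ne_zero hB.det_pos.ne') hXu.ne_zero
    haveI iR : Invertible R := R.invertibleOfIsUnitDet hRu
    have hRiH : (R⁻¹)ᴴ = R⁻¹ := by rw [Matrix.conjTranspose_nonsing_inv, hRH]
    set Rh : Matrix (Fin N) (Fin N) ℂ := msqrt R with hRhdef
    have hRpsd : R.PosSemidef := msqrt_psd hXBX
    have hRh2 : Rh * Rh = R := msqrt_sq hRpsd
    have hRhH : Rhᴴ = Rh := msqrt_herm hRpsd
    set U : Matrix (Fin N) (Fin N) ℂ := Y * (X * R⁻¹) with hUdef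
    have hUH : Uᴴ = R⁻¹ * (X * Y) := by
      rw [hUdef, Matrix.conjTranspose_mul, Matrix.conjTranspose_mul, hRiH, hXH, hYH,
        Matrix.mul_assoc]
    have hUHU : Uᴴ * U = 1 := by
      calc Uᴴ * U = R⁻¹ * (X * (Y * Y) * X * R⁻¹) := by
            rw [hUH, hUdef]; simp only [Matrix.mul_assoc]
        _ = R⁻¹ * (R * R * R⁻¹) := by rw [hY2, ← hR2]
        _ = 1 := by
            simp only [Matrix.mul_assoc, Matrix.mul_inv_of_invertible, Matrix.mul_one,
              Matrix.inv_mul_of_invertible]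
    have hUUH : U * Uᴴ = 1 := mul_eq_one_comm.mp hUHU
    have htrRU : (R * U).trace = (X * Y).trace := by
      calc (R * U).trace = (Y * (X * (R⁻¹ * R))).trace := by
            rw [Matrix.trace_mul_comm, hUdef]; simp only [Matrix.mul_assoc]
        _ = (Y * X).trace := by rw [Matrix.inv_mul_of_invertible, Matrix.mul_one]
        _ = (X * Y).trace := Matrix.trace_mul_comm _ _
    -- traces of R
    have htrR_eq : (Rhᴴ * Rh).trace = R.trace := by rw [hRhH, hRh2]
    have hr_im : R.trace.im = 0 := by rw [← htrR_eq]; exact trace_self_im _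
    have hr_nonneg : 0 ≤ R.trace.re := by rw [← htrR_eq]; exact trace_self_re_nonneg _
    -- Cauchy-Schwarz bound
    have hcs := trace_cs Rh (Rh * U)
    have e1 : Rhᴴ * (Rh * U) = R * U := by
      rw [hRhH, ← Matrix.mul_assoc, hRh2]
    have e2 : (Rhᴴ * Rh).trace = R.trace := htrR_eq
    have e3 : ((Rh * U)ᴴ * (Rh * U)).trace = R.trace := by
      calc ((Rh * U)ᴴ * (Rh * U)).trace = (Uᴴ * (R * U)).trace := by
            rw [Matrix.conjTranspose_mul, hRhH]
            rw [Matrix.mul_assoc, ← Matrix.mul_assoc Rh Rh U, hRh2]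
        _ = (R * (U * Uᴴ)).trace := by rw [Matrix.trace_mul_comm, Matrix.mul_assoc]
        _ = R.trace := by rw [hUUH, Matrix.mul_one]
    rw [e1, e2, e3, htrRU] at hcs
    -- now: |tr(X*Y)|^2 ≤ R.trace.re * R.trace.re
    have habs : ‖(X * Y).trace‖ ≤ R.trace.re := by
      nlinarith [norm_nonneg ((X * Y).trace), hr_nonneg, hcs]
    have hre : (X * Y).trace.re ≤ R.trace.re :=
      le_trans (Complex.re_le_norm _) habs
    -- assemble complex inequality
    have hRHS : (X * R * X⁻¹).trace = R.trace := by
      rw [Matrix.trace_mul_cycle, Matrix.inv_mul_of_invertible, Matrix.one_mul]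
    rw [hRHS]
    exact Complex.le_def.mpr ⟨hre, by rw [hm_im, hr_im]⟩
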